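/- Let u, v : ℝ³ → ℝ be smooth functions of (x, y, t). Consider ℝ⁴ with coordinates (x, y, t, λ) and the vector fields X₁ = ∂_y − (λ + v_x)∂_x − u_x ∂_λ and X₂ = ∂_t − (λ² + v_x λ − u + v_y)∂_x − (u_x λ + u_y)∂_λ (the partial derivatives of u and v being evaluated at (x,y,t)). Then the Lie bracket satisfies, at every point of ℝ⁴, [X₁, X₂] = P(v) ∂_x + (P(u) + u_x²) ∂_λ, where P = ∂_x∂_t − ∂_y² + (u − v_y)∂_x² + v_x ∂_x∂_y. In particular, X₁ and X₂ commute identically on ℝ⁴ if and only if (u, v) satisfies the Manakov–Santini system P(u) + u_x² = 0, P(v) = 0. -/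

import Mathlib

noncomputable section

open scoped ContDiff

/-- Partial derivative of `f` along the `i`-th coordinate direction on `ℝⁿ`.
Coordinates on `ℝ³` are `(x, y, t) = (0, 1, 2)`; on `ℝ⁴` they are
`(x, y, t, λ) = (0, 1, 2, 3)`. -/
def pd {n : ℕ} (i : Fin n) (f : (Fin n → ℝ) → ℝ) : (Fin n → ℝ) → ℝ :=
  fun x => fderiv ℝ f x (Pi.single i 1)

/-- Lie bracket of vector fields on `ℝⁿ`:
`[X,Y](p) = (DY)(p)(X(p)) − (DX)(p)(Y(p))`. -/
def lieBr {n : ℕ} (X Y : (Fin n → ℝ) → (Fin n → ℝ)) :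
    (Fin n → ℝ) → (Fin n → ℝ) :=
  fun p => fderiv ℝ Y p (X p) - fderiv ℝ X p (Y p)

/-- Projection `(x, y, t, λ) ↦ (x, y, t)`. -/
def π3 (p : Fin 4 → ℝ) : Fin 3 → ℝ := ![p 0, p 1, p 2]

/-- The operator `P = ∂_x∂_t − ∂_y² + (u − v_y)∂_x² + v_x ∂_x∂_y` applied to `h`. -/
def Pop (u v h : (Fin 3 → ℝ) → ℝ) : (Fin 3 → ℝ) → ℝ :=
  fun x =>
    pd 0 (pd 2 h) x - pd 1 (pd 1 h) x + (u x - pd 1 v x) * pd 0 (pd 0 h) x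
      + pd 0 v x * pd 0 (pd 1 h) x

/-- `X₁ = ∂_y − (λ + v_x)∂_x − u_x ∂_λ` as a vector field on `ℝ⁴`. -/
def msLax1 (u v : (Fin 3 → ℝ) → ℝ) : (Fin 4 → ℝ) → (Fin 4 → ℝ) :=
  fun p => ![-(p 3 + pd 0 v (π3 p)), 1, 0, -(pd 0 u (π3 p))]

/-- `X₂ = ∂_t − (λ² + v_x λ − u + v_y)∂_x − (u_x λ + u_y)∂_λ` as a vector field on `ℝ⁴`. -/
def msLax2 (u v : (Fin 3 → ℝ) → ℝ) : (Fin 4 → ℝ) → (Fin 4 → ℝ) :=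
  fun p =>
    ![-((p 3) ^ 2 + pd 0 v (π3 p) * p 3 - u (π3 p) + pd 1 v (π3 p)), 0, 1,
      -(pd 0 u (π3 p) * p 3 + pd 1 u (π3 p))]

lemma two_le_inf : (2 : WithTop ℕ∞) ≤ ∞ := by
  have : ((2:ℕ∞) : WithTop ℕ∞) ≤ ((⊤:ℕ∞) : WithTop ℕ∞) := WithTop.coe_le_coe.2 le_top
  simpa using this

lemma pd_contDiff {n : ℕ} (i : Fin n) {f : (Fin n → ℝ) → ℝ} (hf : ContDiff ℝ (⊤:ℕ∞) f) :
    ContDiff ℝ (⊤:ℕ∞) (pd i f) :=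
  (hf.fderiv_right (m := (⊤:ℕ∞)) (by simp)).clm_apply contDiff_const

lemma pd_symm {n : ℕ} {f : (Fin n → ℝ) → ℝ} (hf : ContDiff ℝ (⊤:ℕ∞) f) (i j : Fin n)
    (x : Fin n → ℝ) : pd i (pd j f) x = pd j (pd i f) x := by
  have hd : ∀ y, DifferentiableAt ℝ (fderiv ℝ f) y := fun y =>
    ((hf.fderiv_right (m := (⊤:ℕ∞)) (by simp)).differentiable (by simp) y)
  have h1 : ∀ a b : Fin n, pd a (pd b f) x
      = fderiv ℝ (fderiv ℝ f) x (Pi.single a 1) (Pi.single b 1) := by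
    intro a b
    have h2 : pd b f = fun y => (fderiv ℝ f y) (Pi.single b 1) := rfl
    rw [pd, h2, fderiv_clm_apply (hd x) (differentiableAt_const _)]
    simp
  rw [h1, h1]
  exact (hf.contDiffAt.isSymmSndFDerivAt (by rw [minSmoothness_of_isRCLikeNormedField]; exact two_le_inf)).eq _ _

def L3 : (Fin 4 → ℝ) →L[ℝ] (Fin 3 → ℝ) :=
  ContinuousLinearMap.pi
    ![ContinuousLinearMap.proj 0, ContinuousLinearMap.proj 1, ContinuousLinearMap.proj 2]

lemma π3_eq : π3 = ⇑L3 := by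
  funext p j
  fin_cases j <;> simp [π3, L3]

lemma fderiv3_apply (g : (Fin 3 → ℝ) → ℝ) (q w : Fin 3 → ℝ) :
    fderiv ℝ g q w = w 0 * pd 0 g q + w 1 * pd 1 g q + w 2 * pd 2 g q := by
  have hw : w = w 0 • (Pi.single 0 1 : Fin 3 → ℝ) + w 1 • (Pi.single 1 1 : Fin 3 → ℝ) + w 2 • (Pi.single 2 1 : Fin 3 → ℝ) := by
    funext j; fin_cases j <;> simp [Pi.single_apply]
  conv_lhs => rw [hw]
  simp only [map_add, map_smul, smul_eq_mul, pd]

lemma hasFDerivAt_comp3 {g : (Fin 3 → ℝ) → ℝ} (hg : Differentiable ℝ g) (p : Fin 4 → ℝ) :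
    HasFDerivAt (fun q => g (π3 q)) ((fderiv ℝ g (π3 p)).comp L3) p := by
  rw [π3_eq]
  exact ((hg (L3 p)).hasFDerivAt).comp p L3.hasFDerivAt

lemma comp3_apply (g : (Fin 3 → ℝ) → ℝ) (p w : Fin 4 → ℝ) :
    ((fderiv ℝ g (π3 p)).comp L3) w
      = w 0 * pd 0 g (π3 p) + w 1 * pd 1 g (π3 p) + w 2 * pd 2 g (π3 p) := by
  have hLw : L3 w = π3 w := by rw [π3_eq]
  rw [ContinuousLinearMap.comp_apply, hLw, fderiv3_apply]
  simp [π3]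

/-- For smooth `u, v`, the bracket of the Manakov–Santini Lax fields satisfies
`[X₁, X₂] = P(v) ∂_x + (P(u) + u_x²) ∂_λ` at every point of `ℝ⁴`; in particular
`X₁` and `X₂` commute identically iff `(u, v)` solves the Manakov–Santini system. -/
theorem manakov_santini_lax_bracket
    (u v : (Fin 3 → ℝ) → ℝ)
    (hu : ContDiff ℝ (⊤ : ℕ∞) u)
    (hv : ContDiff ℝ (⊤ : ℕ∞) v) :
    (∀ p : Fin 4 → ℝ,
      lieBr (msLax1 u v) (msLax2 u v) p
        = ![Pop u v v (π3 p), 0, 0, Pop u v u (π3 p) + (pd 0 u (π3 p)) ^ 2]) ∧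
    ((∀ p : Fin 4 → ℝ, lieBr (msLax1 u v) (msLax2 u v) p = 0) ↔
      (∀ x : Fin 3 → ℝ,
        Pop u v u x + (pd 0 u x) ^ 2 = 0 ∧ Pop u v v x = 0)) := by
  have du : Differentiable ℝ u := hu.differentiable (by simp)
  have dv : Differentiable ℝ v := hv.differentiable (by simp)
  have dux : Differentiable ℝ (pd 0 u) := (pd_contDiff 0 hu).differentiable (by simp)
  have duy : Differentiable ℝ (pd 1 u) := (pd_contDiff 1 hu).differentiable (by simp)
  have dvx : Differentiable ℝ (pd 0 v) := (pd_contDiff 0 hv).differentiable (by simp)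
  have dvy : Differentiable ℝ (pd 1 v) := (pd_contDiff 1 hv).differentiable (by simp)
  have key : ∀ p : Fin 4 → ℝ,
      lieBr (msLax1 u v) (msLax2 u v) p
        = ![Pop u v v (π3 p), 0, 0, Pop u v u (π3 p) + (pd 0 u (π3 p)) ^ 2] := by
    intro p
    have h3 : HasFDerivAt (fun q : Fin 4 → ℝ => q 3)
        (ContinuousLinearMap.proj 3 : (Fin 4 → ℝ) →L[ℝ] ℝ) p := hasFDerivAt_apply 3 p
    have hA0 : HasFDerivAt (fun q : Fin 4 → ℝ => -(q 3 + pd 0 v (π3 q)))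
        (-((ContinuousLinearMap.proj 3 : (Fin 4 → ℝ) →L[ℝ] ℝ)
          + (fderiv ℝ (pd 0 v) (π3 p)).comp L3)) p :=
      (h3.add (hasFDerivAt_comp3 dvx p)).neg
    have hA3 : HasFDerivAt (fun q : Fin 4 → ℝ => -(pd 0 u (π3 q)))
        (-((fderiv ℝ (pd 0 u) (π3 p)).comp L3)) p :=
      (hasFDerivAt_comp3 dux p).neg
    have hB0 : HasFDerivAt
        (fun q : Fin 4 → ℝ => -((q 3) ^ 2 + pd 0 v (π3 q) * q 3 - u (π3 q) + pd 1 v (π3 q)))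
        (-((p 3 • (ContinuousLinearMap.proj 3 : (Fin 4 → ℝ) →L[ℝ] ℝ)
            + p 3 • (ContinuousLinearMap.proj 3 : (Fin 4 → ℝ) →L[ℝ] ℝ)
            + (pd 0 v (π3 p) • (ContinuousLinearMap.proj 3 : (Fin 4 → ℝ) →L[ℝ] ℝ)
              + p 3 • (fderiv ℝ (pd 0 v) (π3 p)).comp L3)
            - (fderiv ℝ u (π3 p)).comp L3) + (fderiv ℝ (pd 1 v) (π3 p)).comp L3)) p := by
      have := ((((h3.mul h3).add ((hasFDerivAt_comp3 dvx p).mul h3)).sub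
        (hasFDerivAt_comp3 du p)).add (hasFDerivAt_comp3 dvy p)).neg
      simp only [pow_two]
      exact this
    have hB3 : HasFDerivAt
        (fun q : Fin 4 → ℝ => -(pd 0 u (π3 q) * q 3 + pd 1 u (π3 q)))
        (-((pd 0 u (π3 p) • (ContinuousLinearMap.proj 3 : (Fin 4 → ℝ) →L[ℝ] ℝ)
            + p 3 • (fderiv ℝ (pd 0 u) (π3 p)).comp L3)
          + (fderiv ℝ (pd 1 u) (π3 p)).comp L3)) p :=
      (((hasFDerivAt_comp3 dux p).mul h3).add (hasFDerivAt_comp3 duy p)).neg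
    have hX : HasFDerivAt (msLax1 u v)
        (ContinuousLinearMap.pi
          ![-((ContinuousLinearMap.proj 3 : (Fin 4 → ℝ) →L[ℝ] ℝ)
              + (fderiv ℝ (pd 0 v) (π3 p)).comp L3), 0, 0,
            -((fderiv ℝ (pd 0 u) (π3 p)).comp L3)]) p := by
      apply hasFDerivAt_pi.2
      intro i
      fin_cases i
      · exact hA0
      · exact hasFDerivAt_const 1 p
      · exact hasFDerivAt_const 0 p
      · exact hA3
    have hY : HasFDerivAt (msLax2 u v)
        (ContinuousLinearMap.pi
          ![-((p 3 • (ContinuousLinearMap.proj 3 : (Fin 4 → ℝ) →L[ℝ] ℝ)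
              + p 3 • (ContinuousLinearMap.proj 3 : (Fin 4 → ℝ) →L[ℝ] ℝ)
              + (pd 0 v (π3 p) • (ContinuousLinearMap.proj 3 : (Fin 4 → ℝ) →L[ℝ] ℝ)
                + p 3 • (fderiv ℝ (pd 0 v) (π3 p)).comp L3)
              - (fderiv ℝ u (π3 p)).comp L3) + (fderiv ℝ (pd 1 v) (π3 p)).comp L3), 0, 0,
            -((pd 0 u (π3 p) • (ContinuousLinearMap.proj 3 : (Fin 4 → ℝ) →L[ℝ] ℝ)
              + p 3 • (fderiv ℝ (pd 0 u) (π3 p)).comp L3)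
            + (fderiv ℝ (pd 1 u) (π3 p)).comp L3)]) p := by
      apply hasFDerivAt_pi.2
      intro i
      fin_cases i
      · exact hB0
      · exact hasFDerivAt_const 0 p
      · exact hasFDerivAt_const 1 p
      · exact hB3
    have hfX := hX.fderiv
    have hfY := hY.fderiv
    funext i
    simp only [lieBr, hfX, hfY, Pi.sub_apply, ContinuousLinearMap.pi_apply]
    fin_cases i
    · simp only [Fin.zero_eta, Fin.mk_one, Fin.reduceFinMk, Matrix.cons_val_zero,
        Matrix.cons_val_one, Matrix.cons_val_two, Matrix.cons_val_three, Matrix.tail_cons,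
        Matrix.head_cons, ContinuousLinearMap.neg_apply,
        ContinuousLinearMap.add_apply, ContinuousLinearMap.sub_apply,
        ContinuousLinearMap.smul_apply, ContinuousLinearMap.proj_apply, comp3_apply,
        smul_eq_mul, msLax1, msLax2, Pop]
      rw [pd_symm hv 1 0, pd_symm hv 2 0]
      ring
    · simp
    · simp
    · simp only [Fin.zero_eta, Fin.mk_one, Fin.reduceFinMk, Matrix.cons_val_zero,
        Matrix.cons_val_one, Matrix.cons_val_two, Matrix.cons_val_three, Matrix.tail_cons,
        Matrix.head_cons, ContinuousLinearMap.neg_apply,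
        ContinuousLinearMap.add_apply, ContinuousLinearMap.sub_apply,
        ContinuousLinearMap.smul_apply, ContinuousLinearMap.proj_apply, comp3_apply,
        smul_eq_mul, msLax1, msLax2, Pop]
      rw [pd_symm hu 1 0, pd_symm hu 2 0]
      ring
  refine ⟨key, ?_, ?_⟩
  · intro h x
    set p : Fin 4 → ℝ := ![x 0, x 1, x 2, 0] with hp
    have hπ : π3 p = x := by
      funext j; fin_cases j <;> simp [π3, hp]
    have h0 := congrFun ((key p).symm.trans (h p)) 0
    have h3 := congrFun ((key p).symm.trans (h p)) 3
    rw [hπ] at h0 h3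
    simp at h0 h3
    exact ⟨h3, h0⟩
  · intro h p
    rw [key p]
    funext i
    fin_cases i <;> simp [(h (π3 p)).1, (h (π3 p)).2]
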